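/- For natural numbers a < b, the set of integers in the half-open interval (a, b] contains a unique element of maximal 2-adic valuation (number of trailing zero bits), and this element equals p 1 0^k where, writing a and b as d-bit binary strings, p is their longest common prefix, a = p 0 X, b = p 1 Y, and k = d − |p| − 1. -/

import Mathlib

/-- Number of trailing zero bits (2-adic valuation) of an address. -/
def tz (x : ℕ) : ℕ := padicValNat 2 x

/-- Clockwise descendant: `p 1 0^k ↦ p 1 1 0^(k-1)` (meaningful for `1 ≤ tz x`). -/
def CW (x : ℕ) : ℕ := x + 2 ^ (tz x - 1)

/-- Counterclockwise descendant: `p 1 0^k ↦ p 0 1 0^(k-1)` (meaningful for `1 ≤ tz x`). -/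
def CCW (x : ℕ) : ℕ := x - 2 ^ (tz x - 1)

/-- Parent map: `q c 1 0^m ↦ q 1 0^(m+1)`. -/
def UP (x : ℕ) : ℕ := x / 2 ^ (tz x + 2) * 2 ^ (tz x + 2) + 2 ^ (tz x + 1)

/-- One tree step from `a` to a child `b`. -/
def step (a b : ℕ) : Prop := 1 ≤ tz a ∧ (b = CW a ∨ b = CCW a)

/-- The subtree of `x`: addresses reachable by repeated `CW`/`CCW`, including `x`. -/
def subtree (x : ℕ) : Set ℕ := {y | Relation.ReflTransGen step x y}

/-- `Pos a b = p 1 0^k` where `p` is the longest common binary prefix of `a` and `b`. -/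
def Pos (a b : ℕ) : ℕ :=
  b / 2 ^ (Nat.log 2 (a ^^^ b) + 1) * 2 ^ (Nat.log 2 (a ^^^ b) + 1) + 2 ^ Nat.log 2 (a ^^^ b)
/-- for `a < b < 2^d`, the interval `(a, b]` contains a unique element of
maximal number of trailing zero bits, and it equals `Pos a b = p 1 0^k` where `p` is the
longest common prefix of `a` and `b`. -/
lemma tz_form (L m : ℕ) : tz (m * 2^(L+1) + 2^L) = L := by
  haveI : Fact (Nat.Prime 2) := ⟨Nat.prime_two⟩
  have h : m * 2^(L+1) + 2^L = 2^L * (2*m+1) := by rw [pow_succ]; ring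
  rw [tz, h, padicValNat.mul (by positivity) (by omega), padicValNat.prime_pow,
    padicValNat.eq_zero_of_not_dvd (by omega)]
  omega


theorem stmt6 (d a b : ℕ) (hab : a < b) (hb : b < 2 ^ d) :
    Pos a b ∈ Set.Ioc a b ∧
    (∀ y ∈ Set.Ioc a b, tz y ≤ tz (Pos a b)) ∧
    (∀ y ∈ Set.Ioc a b, (∀ z ∈ Set.Ioc a b, tz z ≤ tz y) → y = Pos a b) := by
  haveI : Fact (Nat.Prime 2) := ⟨Nat.prime_two⟩
  have hne : a ^^^ b ≠ 0 := by
    intro h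
    have := xor_eq_zero_iff.mp h
    omega
  set L := Nat.log 2 (a ^^^ b) with hLdef
  have hx1 : 2 ^ L ≤ a ^^^ b := Nat.pow_log_le_self 2 hne
  have hx2 : a ^^^ b < 2 ^ (L + 1) := Nat.lt_pow_succ_log_self (by norm_num) _
  have hXpos : 0 < 2 ^ (L+1) := by positivity
  have hLpos : 0 < 2 ^ L := by positivity
  -- high bits agree
  have hdiv : a / 2 ^ (L+1) = b / 2 ^ (L+1) := by
    rw [← Nat.shiftRight_eq_div_pow, ← Nat.shiftRight_eq_div_pow]
    apply Nat.eq_of_testBit_eq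
    intro i
    rw [Nat.testBit_shiftRight, Nat.testBit_shiftRight]
    have hlt : a ^^^ b < 2 ^ (L + 1 + i) :=
      lt_of_lt_of_le hx2 (Nat.pow_le_pow_right (by norm_num) (by omega))
    have := Nat.testBit_lt_two_pow hlt
    rw [Nat.testBit_xor] at this
    revert this
    cases a.testBit (L+1+i) <;> cases b.testBit (L+1+i) <;> simp
  set m := b / 2 ^ (L+1) with hm
  -- bit L of a^^^b is 1, so bits L differ
  have hbitx : (a ^^^ b) / 2 ^ L % 2 = 1 := by
    have : (a ^^^ b) / 2 ^ L = 1 :=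
      Nat.div_eq_of_lt_le (by simpa using hx1) (by rw [pow_succ] at hx2; omega)
    omega
  have hbitne : a / 2 ^ L % 2 ≠ b / 2 ^ L % 2 := by
    have hta := (Nat.testBit_eq_decide_div_mod_eq (i := L) (x := a))
    have htb := (Nat.testBit_eq_decide_div_mod_eq (i := L) (x := b))
    have htx := (Nat.testBit_eq_decide_div_mod_eq (i := L) (x := a ^^^ b))
    have hx := Nat.testBit_xor a b L
    rw [hta, htb, htx, hbitx] at hx
    simp at hx
    intro h
    rw [h] at hx
    revert hx
    cases Decidable.em (b / 2 ^ L % 2 = 1) with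
    | inl h1 => simp [h1]
    | inr h1 => simp [h1]
  have key : ∀ x : ℕ, x % 2 ^ (L+1) / 2 ^ L = x / 2 ^ L % 2 := by
    intro x
    rw [pow_succ, Nat.mod_mul_right_div_self]
  set ra := a % 2 ^ (L+1) with hra
  set rb := b % 2 ^ (L+1) with hrb
  have hralt : ra < 2 ^ (L+1) := Nat.mod_lt _ hXpos
  have hrblt : rb < 2 ^ (L+1) := Nat.mod_lt _ hXpos
  have hadec : a = m * 2 ^ (L+1) + ra := by
    rw [← hdiv, hra]; exact (Nat.div_add_mod' a _).symm
  have hbdec : b = m * 2 ^ (L+1) + rb := by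
    rw [hm, hrb]; exact (Nat.div_add_mod' b _).symm
  have hrab : ra < rb := by omega
  have hda : ra / 2 ^ L < 2 := by rw [pow_succ] at hralt; exact Nat.div_lt_of_lt_mul hralt
  have hdb : rb / 2 ^ L < 2 := by rw [pow_succ] at hrblt; exact Nat.div_lt_of_lt_mul hrblt
  have hdne : ra / 2 ^ L ≠ rb / 2 ^ L := by
    rw [hra, hrb, key a, key b]; exact hbitne
  have hdle : ra / 2 ^ L ≤ rb / 2 ^ L := Nat.div_le_div_right (le_of_lt hrab)
  have hdlt : ra / 2 ^ L < rb / 2 ^ L := Nat.lt_of_le_of_ne hdle hdne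
  have hra0 : ra / 2 ^ L = 0 :=
    Nat.lt_one_iff.mp (Nat.lt_of_lt_of_le hdlt (Nat.lt_succ_iff.mp hdb))
  have hrb1 : rb / 2 ^ L = 1 :=
    Nat.le_antisymm (Nat.lt_succ_iff.mp hdb)
      (Nat.succ_le_of_lt (Nat.lt_of_le_of_lt (Nat.zero_le _) hdlt))
  have hside1 : ra < 2 ^ L := by
    have := (Nat.div_eq_zero_iff.mp hra0).resolve_left hLpos.ne'
    exact this
  have hside2 : 2 ^ L ≤ rb := by
    have := Nat.div_mul_le_self rb (2 ^ L)
    calc 2 ^ L = rb / 2 ^ L * 2 ^ L := by rw [hrb1]; ring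
    _ ≤ rb := Nat.div_mul_le_self rb (2 ^ L)
  have hPos : Pos a b = m * 2 ^ (L+1) + 2 ^ L := rfl
  have htzPos : tz (Pos a b) = L := by rw [hPos]; exact tz_form L m
  have hmem : Pos a b ∈ Set.Ioc a b := by
    rw [Set.mem_Ioc, hPos]
    omega
  -- second part: any y in (a,b] has tz y ≤ L
  have hbound : ∀ y ∈ Set.Ioc a b, tz y ≤ L := by
    intro y hy
    rw [Set.mem_Ioc] at hy
    by_contra hcon
    push_neg at hcon
    have hdvd : 2 ^ (L+1) ∣ y :=
      dvd_trans (pow_dvd_pow 2 (by omega : L + 1 ≤ tz y)) pow_padicValNat_dvd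
    obtain ⟨c, hc⟩ := hdvd
    have hcomm : m * 2 ^ (L+1) = 2 ^ (L+1) * m := Nat.mul_comm _ _
    have h2 : m + 1 ≤ c := by
      rcases Nat.lt_or_ge m c with h | h
      · omega
      · exfalso
        have hle : 2 ^ (L+1) * c ≤ 2 ^ (L+1) * m := Nat.mul_le_mul_left _ h
        omega
    have h3 : 2 ^ (L+1) * (m+1) ≤ 2 ^ (L+1) * c := Nat.mul_le_mul_left _ h2
    have h4 : 2 ^ (L+1) * (m+1) = m * 2 ^ (L+1) + 2 ^ (L+1) := by ring
    omega
  -- elements of tz exactly L and divisible by 2^L must be Pos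
  have huniq : ∀ y ∈ Set.Ioc a b, tz y = L → y = Pos a b := by
    intro y hy htzy
    rw [Set.mem_Ioc] at hy
    have hy0 : y ≠ 0 := by omega
    have hdvdL : 2 ^ L ∣ y :=
      dvd_trans (pow_dvd_pow 2 (le_of_eq htzy.symm)) pow_padicValNat_dvd
    have hnd : ¬ 2 ^ (L+1) ∣ y := by
      have h := pow_succ_padicValNat_not_dvd (p := 2) (n := y) hy0
      rwa [show padicValNat 2 y = L from htzy] at h
    obtain ⟨e, he⟩ := hdvdL
    have hodd : e % 2 = 1 := by
      by_contra h
      have h0 : e % 2 = 0 := by omega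
      obtain ⟨g, hg⟩ : ∃ g, e = 2 * g := ⟨e / 2, by omega⟩
      exact hnd ⟨g, by rw [he, hg, pow_succ]; ring⟩
    obtain ⟨f, hfe⟩ : ∃ f, e = 2 * f + 1 := ⟨e / 2, by omega⟩
    have hf : y = f * 2 ^ (L+1) + 2 ^ L := by
      rw [he, hfe, pow_succ]; ring
    have hcomm : m * 2 ^ (L+1) = 2 ^ (L+1) * m := Nat.mul_comm _ _
    have hcomf : f * 2 ^ (L+1) = 2 ^ (L+1) * f := Nat.mul_comm _ _
    have hfm : f = m := by
      rcases Nat.lt_trichotomy f m with h | h | h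
      · exfalso
        have : 2 ^ (L+1) * (f+1) ≤ 2 ^ (L+1) * m := Nat.mul_le_mul_left _ (by omega)
        have h4 : 2 ^ (L+1) * (f+1) = f * 2 ^ (L+1) + 2 ^ (L+1) := by ring
        -- then y = f*X + 2^L < f*X + X ≤ m*X ≤ a < y
        rw [pow_succ] at *
        omega
      · exact h
      · exfalso
        have : 2 ^ (L+1) * (m+1) ≤ 2 ^ (L+1) * f := Nat.mul_le_mul_left _ (by omega)
        have h4 : 2 ^ (L+1) * (m+1) = m * 2 ^ (L+1) + 2 ^ (L+1) := by ring
        omega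
    rw [hPos, hf, hfm]
  refine ⟨hmem, ?_, ?_⟩
  · intro y hy
    rw [htzPos]
    exact hbound y hy
  · intro y hy hmax
    apply huniq y hy
    have h1 := hbound y hy
    have h2 := hmax (Pos a b) hmem
    rw [htzPos] at h2
    omega
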